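/- Let R_self > |R_m| ≥ 0, let Z̄₀ = [[1, R̄_m],[R̄_m, 1]] with R̄_m = R_m/R_self, and a(ψ) = (1, e^{−iψ})ᵀ. Then the two entries of the vector Z̄₀^{−1/2}·a(ψ) have equal absolute value, where Z̄₀^{−1/2} denotes the inverse of the positive-definite square root of Z̄₀. -/

import Mathlib

open Matrix Complex

/-- Proposition 1 (qualitative part): the entries of Z̄₀^{−1/2}·a(ψ) have equal magnitude. -/
theorem stmt_3 (Rself Rm : ℝ) (h : |Rm| < Rself) (ψ : ℝ)
    (Rmbar : ℝ) (hRmbar : Rmbar = Rm / Rself)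
    (S : Matrix (Fin 2) (Fin 2) ℝ) (hS : S.PosDef)
    (hSsq : S * S = !![1, Rmbar; Rmbar, 1])
    (a : Fin 2 → ℂ) (ha : a = ![1, Complex.exp (-(ψ : ℂ) * Complex.I)]) :
    ‖((S⁻¹.map (Complex.ofReal)) *ᵥ a) 0‖ =
      ‖((S⁻¹.map (Complex.ofReal)) *ᵥ a) 1‖ := by
  subst ha
  -- S is symmetric
  have hsym : S 1 0 = S 0 1 := by
    have := congr_fun (congr_fun hS.1 0) 1
    simpa [Matrix.conjTranspose_apply] using this
  -- diagonal entries are positive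
  have hd0 : 0 < S 0 0 := by
    have := hS.dotProduct_mulVec_pos (x := Pi.single 0 1) (by
      intro hx
      have := congr_fun hx 0
      simp [Pi.single_apply] at this)
    simpa [dotProduct, Matrix.mulVec, Fin.sum_univ_two, Pi.single_apply] using this
  have hd1 : 0 < S 1 1 := by
    have := hS.dotProduct_mulVec_pos (x := Pi.single 1 1) (by
      intro hx
      have := congr_fun hx 1
      simp [Pi.single_apply] at this)
    simpa [dotProduct, Matrix.mulVec, Fin.sum_univ_two, Pi.single_apply] using this
  -- entries of S * S
  have h00 : S 0 0 * S 0 0 + S 0 1 * S 1 0 = 1 := by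
    have := congr_fun (congr_fun hSsq 0) 0
    simpa [Matrix.mul_apply, Fin.sum_univ_two] using this
  have h11 : S 1 0 * S 0 1 + S 1 1 * S 1 1 = 1 := by
    have := congr_fun (congr_fun hSsq 1) 1
    simpa [Matrix.mul_apply, Fin.sum_univ_two] using this
  have hdiag : S 1 1 = S 0 0 := by nlinarith
  -- explicit inverse
  have hdet : S.det ≠ 0 := hS.det_pos.ne'
  have hinv : S⁻¹ = (S.det)⁻¹ • !![S 1 1, -(S 0 1); -(S 1 0), S 0 0] := by
    rw [Matrix.inv_def, Matrix.adjugate_fin_two, Ring.inverse_eq_inv']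
  set p : ℝ := S 0 0 with hp
  set q : ℝ := S 0 1 with hq
  set d : ℝ := (S.det)⁻¹ with hd
  set e : ℂ := Complex.exp (-(ψ : ℂ) * Complex.I) with he
  have hE0 : ((S⁻¹.map (Complex.ofReal)) *ᵥ ![1, e]) 0 =
      (d * p : ℝ) - (d * q : ℝ) * e := by
    simp [hinv, hdiag, hsym, Matrix.mulVec, dotProduct, Fin.sum_univ_two,
      Matrix.map_apply]
    push_cast
    ring
  have hE1 : ((S⁻¹.map (Complex.ofReal)) *ᵥ ![1, e]) 1 =
      -(d * q : ℝ) + (d * p : ℝ) * e := by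
    simp [hinv, hdiag, hsym, Matrix.mulVec, dotProduct, Fin.sum_univ_two,
      Matrix.map_apply]
  have habs_e : ‖e‖ = 1 := by
    rw [he, Complex.norm_exp]
    simp
  have hmul : e * (starRingEnd ℂ) e = 1 := by
    rw [he, ← Complex.exp_conj, ← Complex.exp_add]
    simp
  have hconj : -(d * q : ℝ) + (d * p : ℝ) * e
      = e * (starRingEnd ℂ) ((d * p : ℝ) - (d * q : ℝ) * e) := by
    rw [map_sub, _root_.map_mul, Complex.conj_ofReal, Complex.conj_ofReal]
    linear_combination ((d * q : ℝ) : ℂ) * hmul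
  rw [hE0, hE1, hconj, norm_mul, habs_e, Complex.norm_conj, one_mul]
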